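/- Let I = I(C_{2n+1}) be the edge ideal of an odd cycle, w = x_1⋯x_{2n+1}, m the maximal homogeneous ideal, s = k(n+1)+r with 0 ≤ r ≤ n, and set J = Σ_{i=1}^k I^{s-i(n+1)} w^i. Then I^s ∩ J = w·m·I^{s-(n+1)}. -/

import Mathlib

open MvPolynomial Finset Pointwise

section Aux

lemma prodPair {M : Type*} [CommMonoid M] (h : ℕ → M) (m : ℕ) :
    ∏ x ∈ Finset.range (2 * m), h x = ∏ l ∈ Finset.range m, (h (2 * l) * h (2 * l + 1)) := by
  induction m with
  | zero => simp
  | succ m ih =>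
    have h2 : 2 * (m + 1) = (2 * m) + 1 + 1 := by ring
    rw [Finset.prod_range_succ, ← ih, h2, Finset.prod_range_succ, Finset.prod_range_succ,
      mul_assoc]

lemma prodMemPow {R : Type*} [CommRing R] (I : Ideal R) {ι : Type*} [DecidableEq ι]
    (s : Finset ι) (f : ι → R) (h : ∀ l ∈ s, f l ∈ I) : ∏ l ∈ s, f l ∈ I ^ s.card := by
  induction s using Finset.induction with
  | empty => simp [Ideal.one_eq_top]
  | @insert a s' hx ih =>
    rw [Finset.prod_insert hx, Finset.card_insert_of_notMem hx, pow_succ, mul_comm (I ^ s'.card)]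
    exact Ideal.mul_mem_mul (h a (Finset.mem_insert_self _ _))
      (ih fun l hl => h l (Finset.mem_insert_of_mem hl))

lemma prodMemPowSum {R : Type*} [CommRing R] (I : Ideal R) {ι : Type*} [DecidableEq ι]
    (s : Finset ι) (f : ι → R) (g : ι → ℕ) (h : ∀ l ∈ s, f l ∈ I ^ g l) :
    ∏ l ∈ s, f l ∈ I ^ (∑ l ∈ s, g l) := by
  induction s using Finset.induction with
  | empty => simp [Ideal.one_eq_top]
  | @insert a s' hx ih =>
    rw [Finset.prod_insert hx, Finset.sum_insert hx, pow_add]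
    exact Ideal.mul_mem_mul (h a (Finset.mem_insert_self _ _))
      (ih fun l hl => h l (Finset.mem_insert_of_mem hl))

end Aux

section Deg

variable {σ K : Type*} [CommRing K] [DecidableEq σ]

lemma degAdd (a b : σ →₀ ℕ) : (a + b).degree = a.degree + b.degree := by
  simp [Finsupp.degree_eq_weight_one, map_add]

/-- Ideal of polynomials all of whose monomials have degree ≥ j. -/
def lowVanish (σ K : Type*) [CommRing K] [DecidableEq σ] (j : ℕ) : Ideal (MvPolynomial σ K) where
  carrier := {f | ∀ α : σ →₀ ℕ, α.degree < j → coeff α f = 0}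
  zero_mem' := by intro α _; simp
  add_mem' := by intro a b ha hb α hα; simp [coeff_add, ha α hα, hb α hα]
  smul_mem' := by
    intro c f hf α hα
    rw [smul_eq_mul, coeff_mul]
    apply Finset.sum_eq_zero
    rintro ⟨β, γ⟩ hβγ
    rw [Finset.HasAntidiagonal.mem_antidiagonal] at hβγ
    have hγ : γ.degree < j := by
      have := degAdd β γ
      rw [hβγ] at this
      omega
    exact mul_eq_zero_of_right _ (hf γ hγ)

lemma mem_lowVanish_iff {j : ℕ} {f : MvPolynomial σ K} :
    f ∈ lowVanish σ K j ↔ ∀ α : σ →₀ ℕ, α.degree < j → coeff α f = 0 := Iff.rfl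

lemma pow_span_X_le_lowVanish (j : ℕ) :
    (Ideal.span (Set.range (X : σ → MvPolynomial σ K))) ^ j ≤ lowVanish σ K j := by
  induction j with
  | zero => intro f _ α hα; omega
  | succ j ih =>
    rw [pow_succ]
    refine Ideal.mul_le.mpr fun r hr x hx => ?_
    have hr' : r ∈ lowVanish σ K j := ih hr
    have hx' : x ∈ lowVanish σ K 1 := by
      refine Ideal.span_le.mpr ?_ hx
      rintro _ ⟨i, rfl⟩ α hα
      have : α = 0 := by
        rwa [Nat.lt_one_iff, Finsupp.degree_eq_zero_iff] at hα
      subst this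
      classical
      rw [coeff_X', if_neg]
      intro h
      have := DFunLike.congr_fun h i
      simp at this
    intro α hα
    rw [coeff_mul]
    apply Finset.sum_eq_zero
    rintro ⟨β, γ⟩ hβγ
    rw [Finset.HasAntidiagonal.mem_antidiagonal] at hβγ
    have hdeg := degAdd β γ
    rw [hβγ] at hdeg
    by_cases hγ : γ.degree = 0
    · exact mul_eq_zero_of_right _ (hx' γ (by omega))
    · exact mul_eq_zero_of_left (hr' β (by omega)) _

lemma homogeneousComponent_eq_zero_of_lowVanish {j d : ℕ} {f : MvPolynomial σ K}
    (hf : f ∈ lowVanish σ K j) (hd : d < j) : homogeneousComponent d f = 0 := by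
  ext α
  rw [coeff_homogeneousComponent]
  split_ifs with h
  · exact hf α (h ▸ hd)
  · simp

lemma homogeneousComponent_mul_right {r g : MvPolynomial σ K} {D d : ℕ}
    (hg : g.IsHomogeneous D) (hd : D ≤ d) :
    homogeneousComponent d (r * g) = homogeneousComponent (d - D) r * g := by
  classical
  ext α
  rw [coeff_homogeneousComponent, coeff_mul, coeff_mul]
  by_cases hα : α.degree = d
  · rw [if_pos hα]
    apply Finset.sum_congr rfl
    rintro ⟨β, γ⟩ hβγ
    rw [Finset.HasAntidiagonal.mem_antidiagonal] at hβγ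
    by_cases hγ : coeff γ g = 0
    · simp [hγ]
    · have hγd : γ.degree = D := by
        by_contra hne
        exact hγ (hg.coeff_eq_zero hne)
      have hβd : β.degree = d - D := by
        have := degAdd β γ
        rw [hβγ, hα, hγd] at this
        omega
      rw [coeff_homogeneousComponent, if_pos hβd]
  · rw [if_neg hα]
    symm
    apply Finset.sum_eq_zero
    rintro ⟨β, γ⟩ hβγ
    rw [Finset.HasAntidiagonal.mem_antidiagonal] at hβγ
    by_cases hγ : coeff γ g = 0
    · simp [hγ]
    · have hγd : γ.degree = D := by
        by_contra hne
        exact hγ (hg.coeff_eq_zero hne)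
      rw [coeff_homogeneousComponent, if_neg, zero_mul]
      intro hβd
      apply hα
      have := degAdd β γ
      rw [hβγ, hγd, hβd] at this
      omega

lemma homog_mem_pow_span_X {p : MvPolynomial σ K} {e j : ℕ}
    (hp : p.IsHomogeneous e) (hj : j ≤ e) :
    p ∈ (Ideal.span (Set.range (X : σ → MvPolynomial σ K))) ^ j := by
  classical
  have hm : ∀ α : σ →₀ ℕ, ∀ c : K, j ≤ α.degree →
      (monomial α c : MvPolynomial σ K) ∈
        (Ideal.span (Set.range (X : σ → MvPolynomial σ K))) ^ j := by
    intro α c hα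
    rw [monomial_eq]
    have hprod : (α.prod fun i k => (X i : MvPolynomial σ K) ^ k) ∈
        (Ideal.span (Set.range (X : σ → MvPolynomial σ K))) ^ α.degree := by
      rw [Finsupp.prod, Finsupp.degree]
      exact prodMemPowSum _ _ _ _ fun i _ =>
        Ideal.pow_mem_pow (Ideal.subset_span (Set.mem_range_self i)) _
    exact Ideal.mul_mem_left _ _ (Ideal.pow_le_pow_right hα hprod)
  rw [p.as_sum]
  apply Ideal.sum_mem
  intro α hα
  apply hm
  have hdeg : α.degree = e := by
    by_contra h
    exact mem_support_iff.mp hα (hp.coeff_eq_zero h)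
  omega


lemma component_mem_mul_of_span_homog (S : Set (MvPolynomial σ K)) (D j : ℕ)
    (hS : ∀ g ∈ S, g.IsHomogeneous D) {f : MvPolynomial σ K} (hf : f ∈ Ideal.span S)
    (d : ℕ) (hd : D + j ≤ d) :
    homogeneousComponent d f ∈
      (Ideal.span (Set.range (X : σ → MvPolynomial σ K))) ^ j * Ideal.span S := by
  obtain ⟨c, hsupp, rfl⟩ := Submodule.mem_span_set.mp hf
  rw [Finsupp.sum, map_sum]
  apply Ideal.sum_mem
  intro g hg
  have hgS : g ∈ S := hsupp hg
  rw [smul_eq_mul, homogeneousComponent_mul_right (hS g hgS) (by omega)]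
  exact Ideal.mul_mem_mul
    (homog_mem_pow_span_X (homogeneousComponent_isHomogeneous _ _) (by omega))
    (Ideal.subset_span hgS)

lemma mem_finset_sum_ideal {R ι : Type*} [CommRing R] [DecidableEq ι] (s : Finset ι)
    (N : ι → Ideal R) {x : R} (hx : x ∈ ∑ i ∈ s, N i) :
    ∃ g : ι → R, (∀ i ∈ s, g i ∈ N i) ∧ x = ∑ i ∈ s, g i := by
  induction s using Finset.induction generalizing x with
  | empty => exact ⟨fun _ => 0, by simp, by simpa using hx⟩
  | @insert a s' ha ih =>
    rw [Finset.sum_insert ha, Submodule.add_eq_sup, Submodule.mem_sup] at hx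
    obtain ⟨y, hy, z, hz, rfl⟩ := hx
    obtain ⟨g', hg', rfl⟩ := ih hz
    refine ⟨fun i => if i = a then y else g' i, ?_, ?_⟩
    · intro i hi
      rcases Finset.mem_insert.mp hi with rfl | hi2
      · simpa using hy
      · have hne : ¬ i = a := by rintro rfl; exact ha hi2
        simp only [hne, if_false]
        exact hg' i hi2
    · rw [Finset.sum_insert ha, if_pos rfl]
      congr 1
      apply Finset.sum_congr rfl
      intro i hi
      have hne : ¬ i = a := by rintro rfl; exact ha hi
      simp only [hne, if_false]

lemma setPow_homog (G : Set (MvPolynomial σ K)) (D : ℕ)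
    (hG : ∀ g ∈ G, g.IsHomogeneous D) (t : ℕ) :
    ∀ a ∈ G ^ t, MvPolynomial.IsHomogeneous a (D * t) := by
  induction t with
  | zero => intro a ha; rw [pow_zero, Set.mem_one] at ha; subst ha
            simpa using isHomogeneous_one σ K
  | succ t ih =>
    intro a ha
    rw [pow_succ] at ha
    obtain ⟨x, hx, y, hy, rfl⟩ := ha
    have : D * (t + 1) = D * t + D := by ring
    rw [this]
    exact (ih x hx).mul (hG y hy)

end Deg
lemma idealSpanPow {R : Type*} [CommRing R] (s : Set R) :
    ∀ t : ℕ, Ideal.span s ^ t = Ideal.span (s ^ t)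
  | 0 => by
    rw [pow_zero, pow_zero, Ideal.one_eq_top]
    have : (1 : Set R) = {1} := rfl
    rw [this, Ideal.span_singleton_one]
  | t + 1 => by
    rw [pow_succ, idealSpanPow s t, pow_succ, Ideal.span_mul_span']

section Cycle

variable {K : Type*} [CommRing K]

open Fin.NatCast in
lemma xw_mem (n : ℕ) (j : Fin (2 * n + 1)) :
    (X j : MvPolynomial (Fin (2 * n + 1)) K) * ∏ t, X t ∈
      (Ideal.span {f : MvPolynomial (Fin (2 * n + 1)) K |
        ∃ i : Fin (2 * n + 1), f = X i * X (i + 1)}) ^ (n + 1) := by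
  set h : ℕ → MvPolynomial (Fin (2 * n + 1)) K :=
    fun m => X (j + (m : Fin (2 * n + 1))) with hh
  have h4 : ∏ x ∈ Finset.range (2 * n + 1), h x = ∏ t, X t := by
    rw [← Fin.prod_univ_eq_prod_range]
    simp only [hh, Fin.cast_val_eq_self]
    have := Equiv.prod_comp (Equiv.addLeft j)
      (X : Fin (2 * n + 1) → MvPolynomial (Fin (2 * n + 1)) K)
    simpa [Equiv.coe_addLeft] using this
  have key : (X j : MvPolynomial (Fin (2 * n + 1)) K) * ∏ t, X t
      = ∏ l ∈ Finset.range (n + 1), (h (2 * l) * h (2 * l + 1)) := by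
    rw [← prodPair h (n + 1)]
    have h2 : 2 * (n + 1) = (2 * n + 1) + 1 := by ring
    rw [h2, Finset.prod_range_succ]
    have h3 : h (2 * n + 1) = X j := by
      simp only [hh, Fin.natCast_self, add_zero]
    rw [h3, h4]
    exact mul_comm _ _
  rw [key]
  have hmem : ∀ l ∈ Finset.range (n + 1), h (2 * l) * h (2 * l + 1) ∈
      Ideal.span {f : MvPolynomial (Fin (2 * n + 1)) K |
        ∃ i : Fin (2 * n + 1), f = X i * X (i + 1)} := by
    intro l _
    apply Ideal.subset_span
    refine ⟨j + ((2 * l : ℕ) : Fin (2 * n + 1)), ?_⟩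
    have hcast : ((2 * l + 1 : ℕ) : Fin (2 * n + 1))
        = ((2 * l : ℕ) : Fin (2 * n + 1)) + 1 := by push_cast; ring
    simp only [hh, hcast, add_assoc]
  have := prodMemPow _ _ _ hmem
  rwa [Finset.card_range] at this

end Cycle

theorem pow_inf_J_eq {K : Type*} [Field K] (n : ℕ) (hn : 1 ≤ n)
    (I : Ideal (MvPolynomial (Fin (2 * n + 1)) K))
    (hI : I = Ideal.span {f | ∃ i : Fin (2 * n + 1), f = X i * X (i + 1)})
    (s k r : ℕ) (hk : 1 ≤ k) (hs : s = k * (n + 1) + r) (hr : r ≤ n) :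
    I ^ s ⊓ (∑ i ∈ Finset.Icc 1 k, I ^ (s - i * (n + 1)) * Ideal.span {(∏ t, X t) ^ i})
      = Ideal.span {∏ t, X t} * Ideal.span (Set.range X) * I ^ (s - (n + 1)) := by
  classical
  subst hI
  set G : Set (MvPolynomial (Fin (2 * n + 1)) K) :=
    {f | ∃ i : Fin (2 * n + 1), f = X i * X (i + 1)} with hG
  set w : MvPolynomial (Fin (2 * n + 1)) K := ∏ t, X t with hw
  set m : Ideal (MvPolynomial (Fin (2 * n + 1)) K) := Ideal.span (Set.range X) with hmm
  set I : Ideal (MvPolynomial (Fin (2 * n + 1)) K) := Ideal.span G with hI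
  have hs1 : n + 1 ≤ s := by
    have : n + 1 ≤ k * (n + 1) := Nat.le_mul_of_pos_left _ hk
    omega
  have hGhom : ∀ g ∈ G, MvPolynomial.IsHomogeneous g 2 := by
    rintro g ⟨i, rfl⟩
    simpa using (isHomogeneous_X K i).mul (isHomogeneous_X K (i + 1))
  have hwhom : w.IsHomogeneous (2 * n + 1) := by
    rw [hw]
    have := MvPolynomial.IsHomogeneous.prod (Finset.univ : Finset (Fin (2 * n + 1))) X
      (fun _ => 1) (fun i _ => isHomogeneous_X K i)
    simpa using this
  have hWM : Ideal.span {w} * m ≤ I ^ (n + 1) := by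
    rw [hmm, Ideal.span_mul_span']
    apply Ideal.span_le.mpr
    rintro u hu
    obtain ⟨a, ha, b, hb, rfl⟩ := hu
    obtain rfl : a = w := ha
    obtain ⟨jj, rfl⟩ := hb
    have h := xw_mem (K := K) n jj
    rw [mul_comm (X jj)] at h
    exact h
  have hIm : I ≤ m ^ 2 := by
    apply Ideal.span_le.mpr
    rintro g ⟨i, rfl⟩
    rw [pow_two]
    exact Ideal.mul_mem_mul (Ideal.subset_span (Set.mem_range_self i))
      (Ideal.subset_span (Set.mem_range_self (i + 1)))
  have hIs : I ^ s ≤ m ^ (2 * s) :=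
    le_trans (Ideal.pow_right_mono hIm s) (le_of_eq (pow_mul m 2 s).symm)
  apply le_antisymm
  · -- hard direction
    intro f hf
    rw [Submodule.mem_inf] at hf
    obtain ⟨hfs, hfJ⟩ := hf
    obtain ⟨g, hg, rfl⟩ := mem_finset_sum_ideal _ _ hfJ
    set F : MvPolynomial (Fin (2 * n + 1)) K := ∑ i ∈ Finset.Icc 1 k, g i with hF
    rw [← MvPolynomial.sum_homogeneousComponent F]
    apply Ideal.sum_mem
    intro d _
    by_cases hd : d < 2 * s
    · rw [homogeneousComponent_eq_zero_of_lowVanish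
        (pow_span_X_le_lowVanish (2 * s) (hIs hfs)) hd]
      exact Ideal.zero_mem _
    · push_neg at hd
      rw [hF, map_sum]
      apply Ideal.sum_mem
      intro i hi
      rw [Finset.mem_Icc] at hi
      obtain ⟨hi1, hik⟩ := hi
      obtain ⟨i', rfl⟩ : ∃ i', i = i' + 1 := ⟨i - 1, by omega⟩
      set t : ℕ := s - (i' + 1) * (n + 1) with ht
      have hspan : I ^ t * Ideal.span {w ^ (i' + 1)}
          = Ideal.span (G ^ t * {w ^ (i' + 1)}) := by
        rw [hI, idealSpanPow, Ideal.span_mul_span']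
      have hShom : ∀ u ∈ G ^ t * ({w ^ (i' + 1)} : Set (MvPolynomial (Fin (2 * n + 1)) K)),
          MvPolynomial.IsHomogeneous u (2 * t + (2 * n + 1) * (i' + 1)) := by
        rintro u hu
        obtain ⟨a, ha, b, hb, rfl⟩ := hu
        obtain rfl : b = w ^ (i' + 1) := hb
        exact (setPow_homog G 2 hGhom t a ha).mul (hwhom.pow (i' + 1))
      have hgi : g (i' + 1) ∈ Ideal.span (G ^ t * {w ^ (i' + 1)}) := by
        rw [← hspan]; exact hg (i' + 1) (Finset.mem_Icc.mpr ⟨hi1, hik⟩)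
      have hdle : (2 * t + (2 * n + 1) * (i' + 1)) + (i' + 1) ≤ d := by
        have h1 : (i' + 1) * (n + 1) ≤ k * (n + 1) := Nat.mul_le_mul_right _ hik
        have h2 : (2 * n + 1) * (i' + 1) + (i' + 1) = 2 * ((i' + 1) * (n + 1)) := by ring
        have hA : (i' + 1) * (n + 1) ≤ s := by
          rw [hs]; exact le_trans h1 (Nat.le_add_right _ _)
        have h3 : t + (i' + 1) * (n + 1) = s := by rw [ht]; omega
        omega
      have hcomp := component_mem_mul_of_span_homog _ _ _ hShom hgi d hdle
      rw [← hspan] at hcomp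
      have hle : m ^ (i' + 1) * (I ^ t * Ideal.span {w ^ (i' + 1)}) ≤
          Ideal.span {w} * m * I ^ (s - (n + 1)) := by
        rw [← Ideal.span_singleton_pow]
        have e : m ^ (i' + 1) * (I ^ t * Ideal.span {w} ^ (i' + 1))
            = (Ideal.span {w} * m) ^ i' * (Ideal.span {w} * m) * I ^ t := by
          rw [← pow_succ, mul_pow]
          ring
        rw [e]
        calc (Ideal.span {w} * m) ^ i' * (Ideal.span {w} * m) * I ^ t
            ≤ (I ^ (n + 1)) ^ i' * (Ideal.span {w} * m) * I ^ t :=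
              Ideal.mul_mono (Ideal.mul_mono (Ideal.pow_right_mono hWM i') le_rfl) le_rfl
          _ = Ideal.span {w} * m * ((I ^ (n + 1)) ^ i' * I ^ t) := by ring
          _ = Ideal.span {w} * m * I ^ (s - (n + 1)) := by
              rw [← pow_mul, ← pow_add]
              have h1 : (i' + 1) * (n + 1) ≤ k * (n + 1) := Nat.mul_le_mul_right _ hik
              have h2 : (i' + 1) * (n + 1) = (n + 1) * i' + (n + 1) := by ring
              have hA : (i' + 1) * (n + 1) ≤ s := by
                rw [hs]; exact le_trans h1 (Nat.le_add_right _ _)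
              have h3 : t + (i' + 1) * (n + 1) = s := by rw [ht]; omega
              have he : (n + 1) * i' + t = s - (n + 1) := by omega
              rw [he]
      exact hle hcomp
  · refine le_inf ?_ ?_
    · calc Ideal.span {w} * m * I ^ (s - (n + 1))
          ≤ I ^ (n + 1) * I ^ (s - (n + 1)) := Ideal.mul_mono hWM le_rfl
        _ = I ^ s := by rw [← pow_add]; congr 1; omega
    · have h1 : (1 : ℕ) ∈ Finset.Icc 1 k := Finset.mem_Icc.mpr ⟨le_rfl, hk⟩
      have hterm : Ideal.span {w} * m * I ^ (s - (n + 1))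
          ≤ I ^ (s - 1 * (n + 1)) * Ideal.span {w ^ 1} := by
        rw [pow_one, one_mul]
        calc Ideal.span {w} * m * I ^ (s - (n + 1))
            ≤ Ideal.span {w} * ⊤ * I ^ (s - (n + 1)) :=
              Ideal.mul_mono (Ideal.mul_mono le_rfl le_top) le_rfl
          _ = I ^ (s - (n + 1)) * Ideal.span {w} := by rw [Ideal.mul_top]; ring
      refine le_trans hterm ?_
      rw [← Finset.add_sum_erase _ _ h1, Submodule.add_eq_sup]
      exact le_sup_left
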